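/- Let Q(z) = Σ_{α ∈ A} C_α z^α be a holomorphic polynomial on ℂ^n with all C_α ≠ 0, where A ⊆ ℕ₀^n is finite with |A| ≥ 2 and all α ∈ A lie on a common hyperplane {⟨a, ξ⟩ = l} for some a ∈ ℕ^n, l ∈ ℕ. Then Q has a zero in (ℂ*)^n. -/

import Mathlib

open Finset

lemma base_inj : ∀ (n N : ℕ) (α β : Fin n → ℕ), (∀ i, α i < N) → (∀ i, β i < N) →
    (∑ i, α i * N ^ (i : ℕ)) = (∑ i, β i * N ^ (i : ℕ)) → α = β := by
  intro n
  induction n with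
  | zero => intro N α β _ _ _; funext i; exact i.elim0
  | succ n ih =>
    intro N α β hα hβ hsum
    have hrw : ∀ γ : Fin (n+1) → ℕ, (∑ i, γ i * N ^ (i : ℕ))
        = γ 0 + (∑ i : Fin n, γ i.succ * N ^ (i : ℕ)) * N := by
      intro γ
      rw [Fin.sum_univ_succ, Finset.sum_mul]
      congr 1
      · simp
      · apply Finset.sum_congr rfl
        intro i _
        rw [Fin.val_succ, pow_succ]; ring
    rw [hrw α, hrw β] at hsum
    have hN : 0 < N := lt_of_le_of_lt (Nat.zero_le _) (hα 0)
    have h0 : α 0 = β 0 := by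
      have := congrArg (fun x => x % N) hsum
      simpa [Nat.add_mul_mod_self_right, Nat.mod_eq_of_lt (hα 0),
        Nat.mod_eq_of_lt (hβ 0)] using this
    have htail : (fun i : Fin n => α i.succ) = (fun i => β i.succ) := by
      apply ih N _ _ (fun i => hα i.succ) (fun i => hβ i.succ)
      have hd := congrArg (fun x => x / N) hsum
      simpa [Nat.add_mul_div_right _ _ hN, Nat.div_eq_of_lt (hα 0),
        Nat.div_eq_of_lt (hβ 0)] using hd
    funext i
    refine Fin.cases h0 (fun j => ?_) i
    exact congrFun htail j

theorem stmt_17 (n : ℕ) (A : Finset (Fin n → ℕ)) (C : (Fin n → ℕ) → ℂ)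
    (hC : ∀ α ∈ A, C α ≠ 0) (hcard : 2 ≤ A.card)
    (a : Fin n → ℕ) (ha : ∀ i, 1 ≤ a i) (l : ℕ)
    (hA : ∀ α ∈ A, ∑ i, a i * α i = l) :
    ∃ z : Fin n → ℂ, (∀ i, z i ≠ 0) ∧
      (∑ α ∈ A, C α * ∏ i, (z i) ^ (α i)) = 0 := by
  classical
  set N : ℕ := (A.sup fun α => Finset.univ.sup α) + 1 with hN
  have hlt : ∀ α ∈ A, ∀ i, α i < N := by
    intro α hα i
    have h1 : α i ≤ Finset.univ.sup α := Finset.le_sup (Finset.mem_univ i)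
    have h2 : Finset.univ.sup α ≤ A.sup fun α => Finset.univ.sup α := Finset.le_sup hα
    omega
  set e : (Fin n → ℕ) → ℕ := fun α => ∑ i, α i * N ^ (i : ℕ) with he
  have einj : ∀ α ∈ A, ∀ β ∈ A, e α = e β → α = β := fun α hα β hβ h =>
    base_inj n N α β (hlt α hα) (hlt β hβ) h
  have hA0 : A.Nonempty := Finset.card_pos.mp (by omega)
  obtain ⟨α₀, hα₀, hmin⟩ := Finset.exists_min_image A e hA0
  set m := e α₀ with hm
  obtain ⟨β, hβ, hβne⟩ : ∃ β ∈ A, β ≠ α₀ := by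
    obtain ⟨x, hx, y, hy, hxy⟩ := Finset.one_lt_card.mp hcard
    by_cases hx0 : x = α₀
    · exact ⟨y, hy, by rw [← hx0]; exact hxy.symm⟩
    · exact ⟨x, hx, hx0⟩
  set q : Polynomial ℂ := ∑ α ∈ A, Polynomial.C (C α) * Polynomial.X ^ (e α - m) with hq
  have hcoeff : ∀ k, q.coeff k = ∑ α ∈ A, if e α - m = k then C α else 0 := by
    intro k
    rw [hq, Polynomial.finset_sum_coeff]
    refine Finset.sum_congr rfl fun α _ => ?_
    rw [Polynomial.coeff_C_mul, Polynomial.coeff_X_pow]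
    simp [eq_comm]
  have hc0 : q.coeff 0 = C α₀ := by
    rw [hcoeff]
    rw [Finset.sum_eq_single α₀]
    · simp [hm]
    · intro α hα' hne
      have : e α - m ≠ 0 := by
        intro h
        have : e α = m := le_antisymm (by omega) (hmin α hα')
        exact hne (einj α hα' α₀ hα₀ this)
      simp [this]
    · intro h; exact absurd hα₀ h
  have hβm : 0 < e β - m := by
    have h1 : m ≤ e β := hmin β hβ
    have h2 : e β ≠ m := fun h => hβne (einj β hβ α₀ hα₀ h)
    omega
  have hcβ : q.coeff (e β - m) = C β := by
    rw [hcoeff]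
    rw [Finset.sum_eq_single β]
    · simp
    · intro α hα' hne
      have : e α - m ≠ e β - m := by
        intro h
        have h1 : m ≤ e α := hmin α hα'
        have h2 : m ≤ e β := hmin β hβ
        exact hne (einj α hα' β hβ (by omega))
      simp [this]
    · intro h; exact absurd hβ h
  have hqne : q ≠ 0 := fun h => hC α₀ hα₀ (by rw [← hc0, h, Polynomial.coeff_zero])
  have hdeg : 0 < q.degree := by
    have h1 : e β - m ≤ q.natDegree :=
      Polynomial.le_natDegree_of_ne_zero (by rw [hcβ]; exact hC β hβ)
    have : 0 < q.natDegree := lt_of_lt_of_le hβm h1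
    exact Polynomial.natDegree_pos_iff_degree_pos.mp this
  obtain ⟨t₀, ht₀⟩ := Complex.exists_root hdeg
  have ht0ne : t₀ ≠ 0 := by
    intro h
    apply hC α₀ hα₀
    rw [← hc0, Polynomial.coeff_zero_eq_eval_zero]
    have h2 : Polynomial.eval t₀ q = 0 := ht₀
    rw [h] at h2
    exact h2
  refine ⟨fun i => t₀ ^ N ^ (i : ℕ), fun i => pow_ne_zero _ ht0ne, ?_⟩
  have hprod : ∀ α : Fin n → ℕ, (∏ i : Fin n, (t₀ ^ N ^ (i : ℕ)) ^ (α i)) = t₀ ^ (e α) := by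
    intro α
    rw [he]
    rw [← Finset.prod_pow_eq_pow_sum]
    refine Finset.prod_congr rfl fun i _ => ?_
    rw [← pow_mul, mul_comm]
  have heval : ∑ α ∈ A, C α * t₀ ^ (e α) = t₀ ^ m * Polynomial.eval t₀ q := by
    rw [hq, Polynomial.eval_finset_sum, Finset.mul_sum]
    refine Finset.sum_congr rfl fun α hα' => ?_
    rw [Polynomial.eval_mul, Polynomial.eval_C, Polynomial.eval_pow, Polynomial.eval_X]
    have hpow : t₀ ^ (e α) = t₀ ^ m * t₀ ^ (e α - m) := by
      rw [← pow_add]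
      congr 1
      have := hmin α hα'
      omega
    rw [hpow]; ring
  calc ∑ α ∈ A, C α * ∏ i : Fin n, (t₀ ^ N ^ (i : ℕ)) ^ (α i)
      = ∑ α ∈ A, C α * t₀ ^ (e α) := by
        refine Finset.sum_congr rfl fun α _ => by rw [hprod]
    _ = t₀ ^ m * Polynomial.eval t₀ q := heval
    _ = 0 := by rw [Polynomial.IsRoot.eq_zero ht₀, mul_zero]
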